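/- Let H ∈ (0,1). Then F_H is integrable on (0,∞) and ∫₀^∞ F_H(v) dv ≤ 2/H + 2(3 − H)/((1 − H)(2 − H)). -/

import Mathlib

open Real MeasureTheory

/-- `F_H(v) = 2 cosh(Hv) - |2 sinh(v/2)|^{2H}`. -/
noncomputable def Ffun (H v : ℝ) : ℝ :=
  2 * Real.cosh (H * v) - |2 * Real.sinh (v / 2)| ^ (2 * H)

lemma integral_exp_neg_mul_Ioi_zero' {b : ℝ} (hb : 0 < b) :
    ∫ x in Set.Ioi (0:ℝ), Real.exp (-b*x) = 1 / b := by
  have h := integral_comp_mul_left_Ioi (fun x => Real.exp (-x)) 0 hb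
  simp only [mul_zero, integral_exp_neg_Ioi_zero, smul_eq_mul, mul_one] at h
  simp only [neg_mul]
  rw [h, one_div]

lemma Ffun_eq' (H : ℝ) {v : ℝ} (hv : v ∈ Set.Ioi (0:ℝ)) :
    Ffun H v
      = Real.exp (-(H*v)) + Real.exp (H*v) * (1 - (1 - Real.exp (-v)) ^ (2*H)) := by
  have hv : (0:ℝ) < v := hv
  unfold Ffun
  have h1 : (2:ℝ) * Real.sinh (v/2) = Real.exp (v/2) * (1 - Real.exp (-v)) := by
    rw [Real.sinh_eq]
    have : -(v/2) = v/2 + -v := by ring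
    rw [this, Real.exp_add]
    ring
  have hb : (0:ℝ) < 1 - Real.exp (-v) := by
    have : Real.exp (-v) < 1 := by
      rw [Real.exp_lt_one_iff]; linarith
    linarith
  have habs : |2 * Real.sinh (v/2)| = Real.exp (v/2) * (1 - Real.exp (-v)) := by
    rw [h1, abs_of_pos (by positivity)]
  rw [habs, Real.mul_rpow (Real.exp_pos _).le hb.le, ← Real.exp_mul, Real.cosh_eq]
  have : v / 2 * (2 * H) = H * v := by ring
  rw [this]
  ring

lemma bern' {a x : ℝ} (ha2 : a ≤ 2) (hx : 0 < x) (hx1 : x < 1) :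
    1 - 2*x ≤ (1-x) ^ a := by
  rcases le_or_gt a 1 with h1 | h1
  · have h := Real.rpow_le_rpow_of_exponent_ge (by linarith : (0:ℝ) < 1-x)
      (by linarith) h1
    rw [Real.rpow_one] at h
    linarith
  · have h := one_add_mul_self_le_rpow_one_add (s := -x) (by linarith) h1.le
    rw [show (1:ℝ) + -x = 1 - x by ring] at h
    nlinarith

/-- For `H ∈ (0,1)`, `F_H` is integrable on `(0,∞)` and its integral is
bounded by `2/H + 2(3 − H)/((1 − H)(2 − H))`. -/
theorem Ffun_integrableOn_and_integral_le (H : ℝ) (hH : H ∈ Set.Ioo (0:ℝ) 1) :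
    IntegrableOn (fun v => Ffun H v) (Set.Ioi (0:ℝ))
    ∧ ∫ v in Set.Ioi (0:ℝ), Ffun H v
        ≤ 2 / H + 2 * (3 - H) / ((1 - H) * (2 - H)) := by
  obtain ⟨hH0, hH1⟩ := hH
  have h1H : (0:ℝ) < 1 - H := by linarith
  -- pointwise bounds
  have hnn : ∀ v ∈ Set.Ioi (0:ℝ), 0 ≤ Ffun H v := by
    intro v hv
    rw [Ffun_eq' H hv]
    have hv : (0:ℝ) < v := hv
    have hx1 : Real.exp (-v) < 1 := by rw [Real.exp_lt_one_iff]; linarith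
    have hle1 : (1 - Real.exp (-v)) ^ (2*H) ≤ 1 :=
      Real.rpow_le_one (by linarith) (by linarith [Real.exp_pos (-v)]) (by linarith)
    have := Real.exp_pos (-(H*v))
    have := Real.exp_pos (H*v)
    nlinarith
  have hub : ∀ v ∈ Set.Ioi (0:ℝ),
      Ffun H v ≤ Real.exp (-H*v) + 2 * Real.exp (-(1-H)*v) := by
    intro v hv
    rw [Ffun_eq' H hv]
    have hv : (0:ℝ) < v := hv
    have hx0 : (0:ℝ) < Real.exp (-v) := Real.exp_pos _
    have hx1 : Real.exp (-v) < 1 := by rw [Real.exp_lt_one_iff]; linarith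
    have hb := bern' (a := 2*H) (x := Real.exp (-v)) (by linarith) hx0 hx1
    have h2 : Real.exp (H*v) * (1 - (1 - Real.exp (-v)) ^ (2*H))
        ≤ Real.exp (H*v) * (2 * Real.exp (-v)) := by
      apply mul_le_mul_of_nonneg_left _ (Real.exp_pos _).le
      linarith
    have h3 : Real.exp (H*v) * (2 * Real.exp (-v)) = 2 * Real.exp (-(1-H)*v) := by
      rw [mul_comm (Real.exp (H*v)), mul_assoc, ← Real.exp_add]
      have : -v + H * v = -(1-H)*v := by ring
      rw [this]
    have h4 : Real.exp (-(H*v)) = Real.exp (-H*v) := by rw [neg_mul]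
    linarith
  -- measurability
  have hcont : Continuous (fun v => Ffun H v) := by
    unfold Ffun
    apply Continuous.sub
    · exact continuous_const.mul (Real.continuous_cosh.comp
        (continuous_const.mul continuous_id))
    · exact ((continuous_const.mul (Real.continuous_sinh.comp
        (continuous_id.div_const 2))).abs).rpow_const (fun x => Or.inr (by linarith))
  have hgint : IntegrableOn
      (fun v => Real.exp (-H*v) + 2 * Real.exp (-(1-H)*v)) (Set.Ioi (0:ℝ)) :=
    (exp_neg_integrableOn_Ioi 0 hH0).add ((exp_neg_integrableOn_Ioi 0 h1H).const_mul 2)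
  have hfint : IntegrableOn (fun v => Ffun H v) (Set.Ioi (0:ℝ)) := by
    apply hgint.mono' hcont.aestronglyMeasurable
    rw [ae_restrict_iff' measurableSet_Ioi]
    filter_upwards with v hv
    rw [Real.norm_eq_abs, abs_of_nonneg (hnn v hv)]
    exact hub v hv
  refine ⟨hfint, ?_⟩
  have hle : ∫ v in Set.Ioi (0:ℝ), Ffun H v
      ≤ ∫ v in Set.Ioi (0:ℝ), (Real.exp (-H*v) + 2 * Real.exp (-(1-H)*v)) :=
    setIntegral_mono_on hfint hgint measurableSet_Ioi hub
  have hgval : ∫ v in Set.Ioi (0:ℝ), (Real.exp (-H*v) + 2 * Real.exp (-(1-H)*v))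
      = 1/H + 2 * (1/(1-H)) := by
    rw [integral_add (exp_neg_integrableOn_Ioi 0 hH0)
        ((exp_neg_integrableOn_Ioi 0 h1H).const_mul 2),
      integral_const_mul, integral_exp_neg_mul_Ioi_zero' hH0,
      integral_exp_neg_mul_Ioi_zero' h1H]
  rw [hgval] at hle
  have h2H : (0:ℝ) < 2 - H := by linarith
  have e1 : 1/H ≤ 2/H := by gcongr; norm_num
  have e2 : 2 * (1/(1-H)) = 2*(2-H) / ((1-H)*(2-H)) := by
    field_simp
  have e3 : 2*(2-H) / ((1-H)*(2-H)) ≤ 2*(3-H) / ((1-H)*(2-H)) := by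
    gcongr
    linarith
  linarith
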